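/- Let n ≥ 1, let x_1, …, x_n be pairwise distinct non-negative real numbers, and let r_1, …, r_n be strictly positive natural numbers, such that the real numbers j·x_i for i ∈ {1,…,n}, j ∈ {1,…,r_i} are pairwise distinct. Set m := ∑_{i=1}^n r_i and, for each i and each j ∈ {1,…,r_i}, a_{ij} := [(∏_{ℓ=1, ℓ≠j}^{r_i} ℓ) · ∏_{k≠i} (r_k! · x_k^{r_k})] / [(∏_{ℓ=1, ℓ≠j}^{r_i} (ℓ − j)) · ∏_{k≠i} ∏_{ℓ=1}^{r_k} (ℓ·x_k − j·x_i)]. Then ∏_{i=1}^n ∏_{j=1}^{r_i} (1 + j·x_i)^{a_{ij}} ≤ exp((1/m) · ∏_{i=1}^n (r_i! · x_i^{r_i})). -/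

import Mathlib

set_option maxHeartbeats 1000000
open Finset intervalIntegral MeasureTheory

lemma integral_inv_linear {y : ℝ} (hy : 0 < y) :
    ∫ t in (0:ℝ)..1, (1 + t * y)⁻¹ = Real.log (1 + y) / y := by
  have hpos : ∀ t ∈ Set.uIcc (0:ℝ) 1, 0 < 1 + t * y := by
    intro t ht
    rw [Set.uIcc_of_le zero_le_one] at ht
    nlinarith [ht.1, hy]
  have hderiv : ∀ t ∈ Set.uIcc (0:ℝ) 1,
      HasDerivAt (fun t => Real.log (1 + t * y) / y) (1 + t * y)⁻¹ t := by
    intro t ht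
    have h1 : HasDerivAt (fun t : ℝ => 1 + t * y) y t := by
      simpa using ((hasDerivAt_id t).mul_const y).const_add 1
    have h2 := (Real.hasDerivAt_log (hpos t ht).ne').comp t h1
    have h3 := h2.div_const y
    have h4 : (1 + t * y)⁻¹ * y / y = (1 + t * y)⁻¹ := by
      rw [mul_div_assoc, div_self hy.ne', mul_one]
    rw [h4] at h3
    exact h3
  have hcont : ContinuousOn (fun t : ℝ => (1 + t * y)⁻¹) (Set.uIcc 0 1) := by
    apply ContinuousOn.inv₀
    · fun_prop
    · intro t ht; exact (hpos t ht).ne'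
  have := integral_eq_sub_of_hasDerivAt hderiv (hcont.intervalIntegrable)
  simpa using this


lemma lagrange_eval_sum {ι : Type*} [DecidableEq ι] (s : Finset ι) (hs : s.Nonempty)
    (v : ι → ℝ) (hinj : Set.InjOn v s) (u : ℝ) :
    ∑ i ∈ s, ∏ j ∈ s.erase i, ((v i - v j)⁻¹ * (u - v j)) = 1 := by
  have h := congrArg (Polynomial.eval u) (Lagrange.sum_basis hinj hs)
  simpa [Lagrange.basis, Lagrange.basisDivisor, Polynomial.eval_finset_sum,
    Polynomial.eval_prod] using h

lemma key_identity {ι : Type*} [DecidableEq ι] (s : Finset ι) (hs : s.Nonempty)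
    (v : ι → ℝ) (hv : ∀ i ∈ s, 0 < v i) (hinj : Set.InjOn v s)
    {t : ℝ} (ht : 0 < t) :
    ∑ i ∈ s, (∏ j ∈ s.erase i, (v j - v i))⁻¹ * (1 + t * v i)⁻¹
      = t ^ (s.card - 1) / ∏ j ∈ s, (1 + t * v j) := by
  set e := s.card - 1 with he
  have hfpos : ∀ j ∈ s, 0 < 1 + t * v j := fun j hj => by
    have := hv j hj; nlinarith
  have h := lagrange_eval_sum s hs v hinj (-t⁻¹)
  have hstep : ∀ i ∈ s, ∏ j ∈ s.erase i, ((v i - v j)⁻¹ * (-t⁻¹ - v j))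
      = t⁻¹ ^ e * ∏ j ∈ s.erase i, ((v j - v i)⁻¹ * (1 + t * v j)) := by
    intro i hi
    have hterm : ∀ j ∈ s.erase i, (v i - v j)⁻¹ * (-t⁻¹ - v j)
        = t⁻¹ * ((v j - v i)⁻¹ * (1 + t * v j)) := by
      intro j hj
      rcases Finset.mem_erase.mp hj with ⟨hji, hjs⟩
      have hne : v i - v j ≠ 0 := sub_ne_zero.mpr (fun hh => hji (hinj hjs hi hh.symm))
      have hne' : v j - v i ≠ 0 := sub_ne_zero.mpr (fun hh => hji (hinj hjs hi hh))
      field_simp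
      ring
    rw [Finset.prod_congr rfl hterm, Finset.prod_mul_distrib, Finset.prod_const,
      Finset.card_erase_of_mem hi]
  rw [Finset.sum_congr rfl hstep, ← Finset.mul_sum] at h
  have key : ∑ i ∈ s, ∏ j ∈ s.erase i, ((v j - v i)⁻¹ * (1 + t * v j)) = t ^ e := by
    calc ∑ i ∈ s, ∏ j ∈ s.erase i, ((v j - v i)⁻¹ * (1 + t * v j))
        = (t ^ e * t⁻¹ ^ e) * ∑ i ∈ s, ∏ j ∈ s.erase i, ((v j - v i)⁻¹ * (1 + t * v j)) := by
          rw [← mul_pow, mul_inv_cancel₀ ht.ne', one_pow, one_mul]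
      _ = t ^ e * (t⁻¹ ^ e * ∑ i ∈ s, ∏ j ∈ s.erase i, ((v j - v i)⁻¹ * (1 + t * v j))) := by
          ring
      _ = t ^ e := by rw [h, mul_one]
  have hPpos : 0 < ∏ j ∈ s, (1 + t * v j) := Finset.prod_pos hfpos
  rw [eq_div_iff hPpos.ne', Finset.sum_mul, ← key]
  refine Finset.sum_congr rfl fun i hi => ?_
  have hP : (∏ j ∈ s.erase i, (1 + t * v j)) * (1 + t * v i) = ∏ j ∈ s, (1 + t * v j) :=
    Finset.prod_erase_mul s _ hi
  rw [Finset.prod_mul_distrib, Finset.prod_inv_distrib, ← hP]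
  have hb := (hfpos i hi).ne'
  field_simp
  rw [mul_comm (∏ j ∈ s.erase i, (v j - v i)) (1 + v i * t),
    mul_div_mul_left _ _ (by rw [mul_comm]; exact hb)]

lemma core_sum_bound {ι : Type*} [DecidableEq ι] (s : Finset ι) (hs : s.Nonempty) (v : ι → ℝ)
    (hv : ∀ i ∈ s, 0 < v i) (hinj : Set.InjOn v s) :
    ∑ i ∈ s, (∏ j ∈ s.erase i, v j) / (∏ j ∈ s.erase i, (v j - v i)) * Real.log (1 + v i)
      ≤ (s.card : ℝ)⁻¹ * ∏ i ∈ s, v i := by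
  set e := s.card - 1 with he
  have hm : 1 ≤ s.card := Finset.card_pos.mpr hs
  have hPpos : 0 < ∏ i ∈ s, v i := Finset.prod_pos hv
  -- continuity facts
  have hfpos : ∀ i ∈ s, ∀ t ∈ Set.uIcc (0:ℝ) 1, 0 < 1 + t * v i := by
    intro i hi t ht
    rw [Set.uIcc_of_le zero_le_one] at ht
    nlinarith [ht.1, hv i hi]
  have hcont : ∀ i ∈ s, ContinuousOn (fun t : ℝ => (1 + t * v i)⁻¹) (Set.uIcc 0 1) := by
    intro i hi
    exact ContinuousOn.inv₀ (by fun_prop) (fun t ht => (hfpos i hi t ht).ne')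
  -- rewrite each term
  have hterm : ∀ i ∈ s,
      (∏ j ∈ s.erase i, v j) / (∏ j ∈ s.erase i, (v j - v i)) * Real.log (1 + v i)
        = (∏ i ∈ s, v i) *
          ∫ t in (0:ℝ)..1, (∏ j ∈ s.erase i, (v j - v i))⁻¹ * (1 + t * v i)⁻¹ := by
    intro i hi
    rw [intervalIntegral.integral_const_mul]
    have hlog : Real.log (1 + v i) = v i * ∫ t in (0:ℝ)..1, (1 + t * v i)⁻¹ := by
      rw [integral_inv_linear (hv i hi), mul_div_cancel₀ _ (hv i hi).ne']
    have hPe : (∏ j ∈ s.erase i, v j) * v i = ∏ i ∈ s, v i := Finset.prod_erase_mul s _ hi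
    rw [hlog, ← hPe]; ring
  rw [Finset.sum_congr rfl hterm, ← Finset.mul_sum]
  -- exchange sum and integral
  have hint : ∀ i ∈ s, IntervalIntegrable
      (fun t : ℝ => (∏ j ∈ s.erase i, (v j - v i))⁻¹ * (1 + t * v i)⁻¹)
      volume 0 1 :=
    fun i hi => ((continuousOn_const.mul (hcont i hi)).intervalIntegrable)
  rw [← intervalIntegral.integral_finset_sum hint]
  -- bound the integral
  have hintsum : IntervalIntegrable
      (fun t : ℝ => ∑ i ∈ s, (∏ j ∈ s.erase i, (v j - v i))⁻¹ * (1 + t * v i)⁻¹)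
      volume 0 1 := by
    have h := IntervalIntegrable.sum s hint
    have : (∑ i ∈ s, fun t : ℝ => (∏ j ∈ s.erase i, (v j - v i))⁻¹ * (1 + t * v i)⁻¹)
        = fun t : ℝ => ∑ i ∈ s, (∏ j ∈ s.erase i, (v j - v i))⁻¹ * (1 + t * v i)⁻¹ := by
      ext t; simp
    rwa [this] at h
  have hintpow : IntervalIntegrable (fun t : ℝ => t ^ e) volume 0 1 :=
    (continuous_pow e).intervalIntegrable 0 1
  have hmono : ∫ t in (0:ℝ)..1, ∑ i ∈ s, (∏ j ∈ s.erase i, (v j - v i))⁻¹ * (1 + t * v i)⁻¹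
      ≤ ∫ t in (0:ℝ)..1, t ^ e := by
    apply intervalIntegral.integral_mono_ae_restrict zero_le_one hintsum hintpow
    have h0 : ∀ᵐ t ∂(volume.restrict (Set.Icc (0:ℝ) 1)), t ≠ 0 :=
      ae_restrict_of_ae (by
        rw [MeasureTheory.ae_iff]
        simp only [ne_eq, not_not, Set.setOf_eq_eq_singleton]
        exact Real.volume_singleton)
    have h1 : ∀ᵐ t ∂(volume.restrict (Set.Icc (0:ℝ) 1)), t ∈ Set.Icc (0:ℝ) 1 :=
      ae_restrict_mem measurableSet_Icc
    filter_upwards [h0, h1] with t ht0 ht1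
    have htpos : 0 < t := lt_of_le_of_ne ht1.1 (Ne.symm ht0)
    rw [key_identity s hs v hv hinj htpos]
    have hPp : (1:ℝ) ≤ ∏ j ∈ s, (1 + t * v j) := by
      have := Finset.prod_le_prod (f := fun _ : ι => (1:ℝ)) (g := fun j => 1 + t * v j)
        (fun j hj => zero_le_one) (fun j hj => by show (1:ℝ) ≤ 1 + t * v j; nlinarith [hv j hj, htpos])
      simpa using this
    rw [div_le_iff₀ (by linarith)]
    nlinarith [pow_nonneg htpos.le e]
  have hval : ∫ t in (0:ℝ)..1, t ^ e = (s.card : ℝ)⁻¹ := by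
    rw [integral_pow]
    have : e + 1 = s.card := Nat.succ_pred_eq_of_pos hm
    rw [one_pow, zero_pow (Nat.succ_ne_zero e), ← this]
    push_cast
    ring
  calc (∏ i ∈ s, v i) *
        ∫ t in (0:ℝ)..1, ∑ i ∈ s, (∏ j ∈ s.erase i, (v j - v i))⁻¹ * (1 + t * v i)⁻¹
      ≤ (∏ i ∈ s, v i) * ∫ t in (0:ℝ)..1, t ^ e :=
        mul_le_mul_of_nonneg_left hmono hPpos.le
    _ = (s.card : ℝ)⁻¹ * ∏ i ∈ s, v i := by rw [hval]; ring

lemma core_ineq {ι : Type*} [DecidableEq ι] (s : Finset ι) (hs : s.Nonempty) (v : ι → ℝ)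
    (hv : ∀ i ∈ s, 0 ≤ v i) (hinj : Set.InjOn v s) :
    ∏ i ∈ s, (1 + v i) ^ ((∏ j ∈ s.erase i, v j) / (∏ j ∈ s.erase i, (v j - v i)))
      ≤ Real.exp ((s.card : ℝ)⁻¹ * ∏ i ∈ s, v i) := by
  by_cases h0 : ∃ i ∈ s, v i = 0
  · obtain ⟨i0, hi0, hvi0⟩ := h0
    have hP : ∏ i ∈ s, v i = 0 := Finset.prod_eq_zero hi0 hvi0
    rw [hP, mul_zero, Real.exp_zero]
    have hone : ∀ i ∈ s, (1 + v i) ^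
        ((∏ j ∈ s.erase i, v j) / (∏ j ∈ s.erase i, (v j - v i))) = 1 := by
      intro i hi
      by_cases hii : i = i0
      · subst hii
        rw [hvi0, add_zero, Real.one_rpow]
      · have hnum : ∏ j ∈ s.erase i, v j = 0 :=
          Finset.prod_eq_zero (Finset.mem_erase.mpr ⟨fun h => hii h.symm, hi0⟩) hvi0
        rw [hnum, zero_div, Real.rpow_zero]
    rw [Finset.prod_congr rfl hone, Finset.prod_const_one]
  · push_neg at h0
    have hv' : ∀ i ∈ s, 0 < v i := fun i hi => lt_of_le_of_ne (hv i hi) (Ne.symm (h0 i hi))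
    have hrw : ∀ i ∈ s, (1 + v i) ^
        ((∏ j ∈ s.erase i, v j) / (∏ j ∈ s.erase i, (v j - v i)))
        = Real.exp (((∏ j ∈ s.erase i, v j) / (∏ j ∈ s.erase i, (v j - v i)))
            * Real.log (1 + v i)) := by
      intro i hi
      rw [Real.rpow_def_of_pos (by linarith [hv' i hi] : (0:ℝ) < 1 + v i), mul_comm]
    rw [Finset.prod_congr rfl hrw, ← Real.exp_sum]
    exact Real.exp_le_exp.mpr (core_sum_bound s hs v hv' hinj)

lemma prod_Icc_one_factorial (m : ℕ) : ∏ ℓ ∈ Icc 1 m, ℓ = m.factorial := by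
  induction m with
  | zero => simp
  | succ k ih => rw [Finset.prod_Icc_succ_top (Nat.one_le_iff_ne_zero.mpr (Nat.succ_ne_zero k)), ih,
      Nat.factorial_succ, mul_comm]

lemma prod_linear_Icc (m : ℕ) (y : ℝ) :
    ∏ ℓ ∈ Icc 1 m, ((ℓ : ℝ) * y) = (m.factorial : ℝ) * y ^ m := by
  rw [Finset.prod_mul_distrib, Finset.prod_const, Nat.card_Icc, Nat.add_sub_cancel,
    ← Nat.cast_prod, prod_Icc_one_factorial]

lemma sigma_erase_prod {ι : Type*} [Fintype ι] [DecidableEq ι] (t : ι → Finset ℕ)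
    (f : (i : ι) × ℕ → ℝ) (i : ι) (j : ℕ) :
    ∏ q ∈ (Finset.univ.sigma t).erase ⟨i, j⟩, f q
      = (∏ ℓ ∈ (t i).erase j, f ⟨i, ℓ⟩) * ∏ k ∈ Finset.univ.erase i, ∏ ℓ ∈ t k, f ⟨k, ℓ⟩ := by
  have hset : (Finset.univ.sigma t).erase ⟨i, j⟩
      = Finset.univ.sigma (fun k => if k = i then (t i).erase j else t k) := by
    ext ⟨k, ℓ⟩
    by_cases hk : k = i
    · subst hk
      simp [Finset.mem_erase, Finset.mem_sigma]
    · simp [Finset.mem_erase, Finset.mem_sigma, hk]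
  rw [hset, Finset.prod_sigma, ← Finset.mul_prod_erase Finset.univ _ (Finset.mem_univ i)]
  congr 1
  · rw [if_pos rfl]
  · exact Finset.prod_congr rfl fun k hk => by rw [if_neg (Finset.mem_erase.mp hk).1]

theorem multivariate_basic_inequality_with_repetitions (n : ℕ) (hn : 1 ≤ n)
    (x : Fin n → ℝ) (hx : ∀ i, 0 ≤ x i) (hinj : Function.Injective x)
    (r : Fin n → ℕ) (hr : ∀ i, 0 < r i)
    (hdist : ∀ i i' : Fin n, ∀ j ∈ Finset.Icc 1 (r i), ∀ j' ∈ Finset.Icc 1 (r i'),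
      (i, j) ≠ (i', j') → (j : ℝ) * x i ≠ (j' : ℝ) * x i') :
    ∏ i, ∏ j ∈ Finset.Icc 1 (r i),
        (1 + (j : ℝ) * x i) ^
          (((∏ ℓ ∈ (Finset.Icc 1 (r i)).erase j, (ℓ : ℝ)) *
              ∏ p ∈ Finset.univ.erase i, (((r p).factorial : ℝ) * x p ^ (r p))) /
            ((∏ ℓ ∈ (Finset.Icc 1 (r i)).erase j, ((ℓ : ℝ) - (j : ℝ))) *
              ∏ p ∈ Finset.univ.erase i, ∏ ℓ ∈ Finset.Icc 1 (r p),
                ((ℓ : ℝ) * x p - (j : ℝ) * x i))) ≤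
      Real.exp ((1 / (∑ i, r i : ℝ)) * ∏ i, (((r i).factorial : ℝ) * x i ^ (r i))) := by
  classical
  set v : (i : Fin n) × ℕ → ℝ := fun p => (p.2 : ℝ) * x p.1 with hvdef
  set s : Finset ((i : Fin n) × ℕ) := Finset.univ.sigma (fun i => Finset.Icc 1 (r i)) with hsdef
  have hmem : ∀ p : (i : Fin n) × ℕ, p ∈ s ↔ p.2 ∈ Finset.Icc 1 (r p.1) := by
    intro p; cases p; simp [hsdef, Finset.mem_sigma]
  have hs : s.Nonempty := ⟨⟨⟨0, hn⟩, 1⟩, by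
    rw [hmem]; simp [Finset.mem_Icc]; exact hr _⟩
  have hv0 : ∀ p ∈ s, 0 ≤ v p := fun p _ => mul_nonneg (Nat.cast_nonneg _) (hx _)
  have hinjOn : Set.InjOn v s := by
    intro p hp q hq hpq
    by_contra hne
    refine hdist p.1 q.1 p.2 ((hmem p).mp hp) q.2 ((hmem q).mp hq) (fun h => hne ?_) hpq
    rw [Prod.mk.injEq] at h
    exact Sigma.ext h.1 (heq_of_eq h.2)
  have hr1 : ∀ i : Fin n, x i = 0 → r i = 1 := by
    intro i hxi
    by_contra hne
    have h2 : 2 ≤ r i := by have := hr i; omega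
    have hd := hdist i i 1 (by simp [Finset.mem_Icc]; omega) 2 (by simp [Finset.mem_Icc, h2])
      (by simp)
    simp [hxi] at hd
  have hcard : s.card = ∑ i, r i := by
    rw [hsdef, Finset.card_sigma]
    exact Finset.sum_congr rfl fun i _ => by rw [Nat.card_Icc, Nat.add_sub_cancel]
  have hprodv : ∏ p ∈ s, v p = ∏ i, (((r i).factorial : ℝ) * x i ^ (r i)) := by
    rw [hsdef, Finset.prod_sigma]
    exact Finset.prod_congr rfl fun i _ => prod_linear_Icc (r i) (x i)
  have key := core_ineq s hs v hv0 hinjOn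
  have hL : ∏ p ∈ s, (1 + v p) ^ ((∏ q ∈ s.erase p, v q) / (∏ q ∈ s.erase p, (v q - v p)))
      = ∏ i, ∏ j ∈ Finset.Icc 1 (r i),
        (1 + (j : ℝ) * x i) ^
          (((∏ ℓ ∈ (Finset.Icc 1 (r i)).erase j, (ℓ : ℝ)) *
              ∏ p ∈ Finset.univ.erase i, (((r p).factorial : ℝ) * x p ^ (r p))) /
            ((∏ ℓ ∈ (Finset.Icc 1 (r i)).erase j, ((ℓ : ℝ) - (j : ℝ))) *
              ∏ p ∈ Finset.univ.erase i, ∏ ℓ ∈ Finset.Icc 1 (r p),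
                ((ℓ : ℝ) * x p - (j : ℝ) * x i))) := by
    rw [hsdef, Finset.prod_sigma]
    refine Finset.prod_congr rfl fun i _ => Finset.prod_congr rfl fun j hj => ?_
    congr 1
    have hN : ∏ q ∈ (Finset.univ.sigma fun i => Finset.Icc 1 (r i)).erase ⟨i, j⟩, v q
        = x i ^ ((Finset.Icc 1 (r i)).erase j).card *
          ((∏ ℓ ∈ (Finset.Icc 1 (r i)).erase j, (ℓ : ℝ)) *
            ∏ p ∈ Finset.univ.erase i, (((r p).factorial : ℝ) * x p ^ (r p))) := by
      rw [sigma_erase_prod]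
      rw [show (∏ ℓ ∈ (Finset.Icc 1 (r i)).erase j, v ⟨i, ℓ⟩)
          = ∏ ℓ ∈ (Finset.Icc 1 (r i)).erase j, ((ℓ : ℝ) * x i) from rfl]
      rw [Finset.prod_mul_distrib, Finset.prod_const,
        Finset.prod_congr rfl (fun k _ => prod_linear_Icc (r k) (x k))]
      ring
    have hD : ∏ q ∈ (Finset.univ.sigma fun i => Finset.Icc 1 (r i)).erase ⟨i, j⟩,
          (v q - v ⟨i, j⟩)
        = x i ^ ((Finset.Icc 1 (r i)).erase j).card *
          ((∏ ℓ ∈ (Finset.Icc 1 (r i)).erase j, ((ℓ : ℝ) - (j : ℝ))) *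
            ∏ p ∈ Finset.univ.erase i, ∏ ℓ ∈ Finset.Icc 1 (r p),
              ((ℓ : ℝ) * x p - (j : ℝ) * x i)) := by
      rw [sigma_erase_prod]
      rw [show (∏ ℓ ∈ (Finset.Icc 1 (r i)).erase j, (v ⟨i, ℓ⟩ - v ⟨i, j⟩))
          = ∏ ℓ ∈ (Finset.Icc 1 (r i)).erase j, (((ℓ : ℝ) - (j : ℝ)) * x i) from
        Finset.prod_congr rfl fun ℓ _ => by simp [hvdef]; ring]
      rw [Finset.prod_mul_distrib, Finset.prod_const]
      ring
    have hxc : x i ^ ((Finset.Icc 1 (r i)).erase j).card ≠ 0 := by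
      by_cases hxi : x i = 0
      · have hri := hr1 i hxi
        have hj1 : j = 1 := by
          have := Finset.mem_Icc.mp hj; omega
        rw [hj1, hri]
        simp
      · exact pow_ne_zero _ hxi
    rw [hN, hD, mul_div_mul_left _ _ hxc]
  calc ∏ i, ∏ j ∈ Finset.Icc 1 (r i),
        (1 + (j : ℝ) * x i) ^
          (((∏ ℓ ∈ (Finset.Icc 1 (r i)).erase j, (ℓ : ℝ)) *
              ∏ p ∈ Finset.univ.erase i, (((r p).factorial : ℝ) * x p ^ (r p))) /
            ((∏ ℓ ∈ (Finset.Icc 1 (r i)).erase j, ((ℓ : ℝ) - (j : ℝ))) *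
              ∏ p ∈ Finset.univ.erase i, ∏ ℓ ∈ Finset.Icc 1 (r p),
                ((ℓ : ℝ) * x p - (j : ℝ) * x i)))
      = ∏ p ∈ s, (1 + v p) ^ ((∏ q ∈ s.erase p, v q) / (∏ q ∈ s.erase p, (v q - v p))) :=
        hL.symm
    _ ≤ Real.exp ((s.card : ℝ)⁻¹ * ∏ p ∈ s, v p) := key
    _ = Real.exp ((1 / (∑ i, r i : ℝ)) * ∏ i, (((r i).factorial : ℝ) * x i ^ (r i))) := by
        rw [hprodv, hcard, one_div]
        norm_cast
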